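/- Let γ = 2^{−1/6} e^{iπ/4} = 2^{−2/3}(1 + i) and γ* = 2^{−2/3}(1 − i), and let M^O = [[1, 0, γ* − 1], [0, γ, 0], [1, 0, γ* − 1]], M^L = [[0, 1, 0], [0, 0, 0], [0, 0, 0]], M^R = [[0, 0, 0], [0, 0, 1], [0, 0, 0]] be the 3×3 complex matrices defining the new exact scar state |T⟩ of the PPXPP chain. Then for every n ≥ 4 and every PPXPP-allowed cyclic word s : ZMod n → {O, L, R}, Σ_{k ∈ ZMod n} Tr(F^{s_k} · M^{s_{k+1}} ⋯ M^{s_{k+n−1}}) = 0. (Hence |T⟩ is an exact E = 0 eigenstate of the periodic PPXPP chain.) -/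

import Mathlib

open Matrix

/-- The blocked three-letter alphabet `{O, L, R}`. -/
inductive Blk | O | L | R
deriving DecidableEq

/-- `γ = 2^{−1/6} e^{iπ/4} = 2^{−2/3}(1 + i)`. -/
noncomputable def gam : ℂ := (((2 : ℝ) ^ ((-2 : ℝ) / 3) : ℝ) : ℂ) * (1 + Complex.I)

/-- `γ* = 2^{−2/3}(1 − i)`. -/
noncomputable def gamStar : ℂ := (((2 : ℝ) ^ ((-2 : ℝ) / 3) : ℝ) : ℂ) * (1 - Complex.I)

/-- The MPS tensors of the new exact scar state `|T⟩` of the PPXPP chain. -/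
noncomputable def MT : Blk → Matrix (Fin 3) (Fin 3) ℂ
  | .O => !![1, 0, gamStar - 1; 0, gam, 0; 1, 0, gamStar - 1]
  | .L => !![0, 1, 0; 0, 0, 0; 0, 0, 0]
  | .R => !![0, 0, 0; 0, 0, 1; 0, 0, 0]

/-- The defect matrices: `F^O = M^L + M^R`, `F^L = F^R = M^O`. -/
noncomputable def FT : Blk → Matrix (Fin 3) (Fin 3) ℂ
  | .O => MT .L + MT .R
  | .L => MT .O
  | .R => MT .O

/-! ### Auxiliary material for the proof -/

/-- The real constant `2^{-2/3}` as a complex number. -/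
noncomputable def rc : ℂ := (((2 : ℝ) ^ ((-2 : ℝ) / 3) : ℝ) : ℂ)

lemma gam_eq : gam = rc * (1 + Complex.I) := rfl
lemma gamStar_eq : gamStar = rc * (1 - Complex.I) := rfl

lemma rc_cube : rc ^ 3 = 1 / 4 := by
  rw [rc, show ((((2:ℝ) ^ ((-2:ℝ)/3) : ℝ) : ℂ)) ^ 3
      = (((((2:ℝ) ^ ((-2:ℝ)/3)) ^ 3 : ℝ)) : ℂ) by push_cast; ring]
  rw [← Real.rpow_natCast ((2:ℝ) ^ ((-2:ℝ)/3)) 3, ← Real.rpow_mul (by norm_num)]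
  norm_num

/-- The telescoping matrices `A^s`. -/
noncomputable def AT : Blk → Matrix (Fin 3) (Fin 3) ℂ
  | .O => !![0, 1 - 2*rc^2*Complex.I, 0;
             2*rc^2*Complex.I, 0, 1/2 + (1/2 - 2*rc^2)*Complex.I;
             0, -(2*rc^2*Complex.I), 0]
  | .L => !![rc + (2*rc^2 - rc)*Complex.I, 0, 0;
             0, rc*(1 + Complex.I), 0;
             rc*(1 - Complex.I), 0, 0]
  | .R => !![rc + (2*rc^2 - rc)*Complex.I, 0, -(2*rc^2*Complex.I);
             0, 0, 0;
             rc*(1 - Complex.I), 0, 0]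


lemma keyOO : FT .O * MT .O = AT .O * MT .O - MT .O * AT .O := by
  have hI := Complex.I_sq
  have hr3 := rc_cube
  rw [eq_sub_iff_add_eq]
  simp only [FT, MT, AT, gam_eq, gamStar_eq, Matrix.add_mul, Matrix.mul_fin_three,
    Matrix.of_add_of, Matrix.cons_add_cons, Matrix.empty_add_empty, Pi.add_apply]
  refine congrArg Matrix.of (Matrix.vec3_eq (Matrix.vec3_eq ?_ ?_ ?_)
    (Matrix.vec3_eq ?_ ?_ ?_) (Matrix.vec3_eq ?_ ?_ ?_))
  · ring
  · linear_combination ((4 : ℂ) * rc^3) * hI + ((-4 : ℂ)) * hr3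
  · ring
  · linear_combination ((2 : ℂ) * rc^3) * hI + ((-2 : ℂ) + (2 : ℂ) * Complex.I) * hr3
  · ring
  · linear_combination (rc + (-2 : ℂ) * rc^3) * hI + ((2 : ℂ) + (-2 : ℂ) * Complex.I) * hr3
  · ring
  · linear_combination ((4 : ℂ) * rc^3) * hI + ((-4 : ℂ)) * hr3
  · ring

lemma keyOL : FT .O * MT .L = AT .O * MT .L - MT .O * AT .L := by
  have hI := Complex.I_sq
  have hr3 := rc_cube
  rw [eq_sub_iff_add_eq]
  simp only [FT, MT, AT, gam_eq, gamStar_eq, Matrix.add_mul, Matrix.mul_fin_three,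
    Matrix.of_add_of, Matrix.cons_add_cons, Matrix.empty_add_empty, Pi.add_apply]
  refine congrArg Matrix.of (Matrix.vec3_eq (Matrix.vec3_eq ?_ ?_ ?_)
    (Matrix.vec3_eq ?_ ?_ ?_) (Matrix.vec3_eq ?_ ?_ ?_))
  · linear_combination (rc^2) * hI
  · ring
  · ring
  · ring
  · linear_combination (rc^2) * hI
  · ring
  · linear_combination (rc^2) * hI
  · ring
  · ring

lemma keyOR : FT .O * MT .R = AT .O * MT .R - MT .O * AT .R := by
  have hI := Complex.I_sq
  have hr3 := rc_cube
  rw [eq_sub_iff_add_eq]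
  simp only [FT, MT, AT, gam_eq, gamStar_eq, Matrix.add_mul, Matrix.mul_fin_three,
    Matrix.of_add_of, Matrix.cons_add_cons, Matrix.empty_add_empty, Pi.add_apply]
  refine congrArg Matrix.of (Matrix.vec3_eq (Matrix.vec3_eq ?_ ?_ ?_)
    (Matrix.vec3_eq ?_ ?_ ?_) (Matrix.vec3_eq ?_ ?_ ?_))
  · linear_combination (rc^2) * hI
  · ring
  · ring
  · ring
  · ring
  · ring
  · linear_combination (rc^2) * hI
  · ring
  · ring

lemma keyLO : FT .L * MT .O = AT .L * MT .O - MT .L * AT .O := by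
  have hI := Complex.I_sq
  have hr3 := rc_cube
  rw [eq_sub_iff_add_eq]
  simp only [FT, MT, AT, gam_eq, gamStar_eq, Matrix.add_mul, Matrix.mul_fin_three,
    Matrix.of_add_of, Matrix.cons_add_cons, Matrix.empty_add_empty, Pi.add_apply]
  refine congrArg Matrix.of (Matrix.vec3_eq (Matrix.vec3_eq ?_ ?_ ?_)
    (Matrix.vec3_eq ?_ ?_ ?_) (Matrix.vec3_eq ?_ ?_ ?_))
  · ring
  · ring
  · linear_combination ((2 : ℂ) * rc^3) * hI + ((-2 : ℂ) + (-2 : ℂ) * Complex.I) * hr3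
  · ring
  · ring
  · ring
  · ring
  · ring
  · ring

lemma keyRO : FT .R * MT .O = AT .R * MT .O - MT .R * AT .O := by
  have hI := Complex.I_sq
  have hr3 := rc_cube
  rw [eq_sub_iff_add_eq]
  simp only [FT, MT, AT, gam_eq, gamStar_eq, Matrix.add_mul, Matrix.mul_fin_three,
    Matrix.of_add_of, Matrix.cons_add_cons, Matrix.empty_add_empty, Pi.add_apply]
  refine congrArg Matrix.of (Matrix.vec3_eq (Matrix.vec3_eq ?_ ?_ ?_)
    (Matrix.vec3_eq ?_ ?_ ?_) (Matrix.vec3_eq ?_ ?_ ?_))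
  · ring
  · ring
  · ring
  · ring
  · linear_combination (rc^2) * hI
  · ring
  · ring
  · ring
  · ring

lemma keyLR : FT .L * MT .R = AT .L * MT .R - MT .L * AT .R := by
  have hI := Complex.I_sq
  have hr3 := rc_cube
  rw [eq_sub_iff_add_eq]
  simp only [FT, MT, AT, gam_eq, gamStar_eq, Matrix.add_mul, Matrix.mul_fin_three,
    Matrix.of_add_of, Matrix.cons_add_cons, Matrix.empty_add_empty, Pi.add_apply]
  refine congrArg Matrix.of (Matrix.vec3_eq (Matrix.vec3_eq ?_ ?_ ?_)
    (Matrix.vec3_eq ?_ ?_ ?_) (Matrix.vec3_eq ?_ ?_ ?_))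
  · ring
  · ring
  · ring
  · ring
  · ring
  · ring
  · ring
  · ring
  · ring

lemma key (a b : Blk)
    (h : ¬((a = Blk.R ∧ b = Blk.L) ∨ (a = Blk.L ∧ b = Blk.L) ∨ (a = Blk.R ∧ b = Blk.R))) :
    FT a * MT b = AT a * MT b - MT a * AT b := by
  cases a <;> cases b
  · exact keyOO
  · exact keyOL
  · exact keyOR
  · exact keyLO
  · exact absurd (Or.inr (Or.inl ⟨rfl, rfl⟩)) h
  · exact keyLR
  · exact keyRO
  · exact absurd (Or.inl ⟨rfl, rfl⟩) h
  · exact absurd (Or.inr (Or.inr ⟨rfl, rfl⟩)) h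

/-- Partial cyclic products of the tensors. -/
noncomputable def cycProd {n : ℕ} (f : ZMod n → Matrix (Fin 3) (Fin 3) ℂ)
    (a : ZMod n) (m : ℕ) : Matrix (Fin 3) (Fin 3) ℂ :=
  (List.ofFn fun j : Fin m => f (a + ((j : ℕ) : ZMod n))).prod

lemma cycProd_succ {n : ℕ} (f : ZMod n → Matrix (Fin 3) (Fin 3) ℂ) (a : ZMod n) (m : ℕ) :
    cycProd f a (m + 1) = f a * cycProd f (a + 1) m := by
  unfold cycProd
  rw [List.ofFn_succ, List.prod_cons]
  congr 1
  · norm_num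
  · exact congrArg _ (congrArg _ (funext fun j => congrArg f (by push_cast [Fin.val_succ]; ring)))

lemma cycProd_succ' {n : ℕ} (f : ZMod n → Matrix (Fin 3) (Fin 3) ℂ) (a : ZMod n) (m : ℕ) :
    cycProd f a (m + 1) = cycProd f a m * f (a + (m : ZMod n)) := by
  induction m generalizing a with
  | zero => simp [cycProd_succ, cycProd]
  | succ m ih =>
    rw [cycProd_succ, ih (a + 1), ← mul_assoc, ← cycProd_succ]
    congr 2
    push_cast
    ring

/-- for the `|T⟩` MPS tensors, the cyclic insertion sum vanishes
on every PPXPP-allowed cyclic word of length `n ≥ 4`, hence `|T⟩` is an exact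
`E = 0` eigenstate of the periodic PPXPP chain. -/
theorem T_cyclic_insertion_sum_eq_zero
    (n : ℕ) [NeZero n] (hn : 4 ≤ n)
    (s : ZMod n → Blk)
    (hallow : ¬ ∃ k : ZMod n,
      (s k = Blk.R ∧ s (k + 1) = Blk.L) ∨
      (s k = Blk.L ∧ s (k + 1) = Blk.L) ∨
      (s k = Blk.R ∧ s (k + 1) = Blk.R)) :
    ∑ k : ZMod n,
      Matrix.trace (FT (s k) *
        (List.ofFn fun j : Fin (n - 1) =>
          MT (s (k + 1 + ((j : ℕ) : ZMod n)))).prod) = 0 := by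
  have hAll : ∀ k : ZMod n, ¬((s k = Blk.R ∧ s (k + 1) = Blk.L) ∨
      (s k = Blk.L ∧ s (k + 1) = Blk.L) ∨ (s k = Blk.R ∧ s (k + 1) = Blk.R)) :=
    fun k hk => hallow ⟨k, hk⟩
  set f : ZMod n → Matrix (Fin 3) (Fin 3) ℂ := fun x => MT (s x) with hf
  have hgoal : ∀ k : ZMod n,
      (List.ofFn fun j : Fin (n - 1) => MT (s (k + 1 + ((j : ℕ) : ZMod n)))).prod
        = cycProd f (k + 1) (n - 1) := fun k => rfl
  have hn1 : n - 1 = (n - 2) + 1 := by omega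
  have hcast : ((n - 2 : ℕ) : ZMod n) = -2 := by
    rw [Nat.cast_sub (by omega), ZMod.natCast_self]
    norm_num
  -- the telescoped summand
  set u : ZMod n → ℂ := fun k => Matrix.trace (AT (s k) * cycProd f (k + 1) (n - 1)) with hu
  have step : ∀ k : ZMod n,
      Matrix.trace (FT (s k) * cycProd f (k + 1) (n - 1)) = u k - u (k + 1) := by
    intro k
    have h1 : cycProd f (k + 1) (n - 1) = f (k + 1) * cycProd (n := n) f (k + 2) (n - 2) := by
      rw [hn1, cycProd_succ]
      congr 2
      ring
    have h2 : cycProd f (k + 2) (n - 1) = cycProd (n := n) f (k + 2) (n - 2) * f k := by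
      rw [hn1, cycProd_succ']
      congr 1
      rw [hcast]
      congr 1
      ring
    have hkey := key (s k) (s (k + 1)) (hAll k)
    calc Matrix.trace (FT (s k) * cycProd f (k + 1) (n - 1))
        = Matrix.trace ((FT (s k) * MT (s (k + 1))) * cycProd (n := n) f (k + 2) (n - 2)) := by
          rw [h1, ← mul_assoc]
      _ = Matrix.trace (AT (s k) * (f (k + 1) * cycProd (n := n) f (k + 2) (n - 2)))
            - Matrix.trace (MT (s k) * (AT (s (k + 1)) * cycProd (n := n) f (k + 2) (n - 2))) := by
          rw [hkey, Matrix.sub_mul, Matrix.trace_sub, mul_assoc, mul_assoc]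
      _ = u k - u (k + 1) := by
          congr 1
          · rw [hu, ← h1]
          · rw [Matrix.trace_mul_comm, hu]
            show Matrix.trace (AT (s (k + 1)) * cycProd (n := n) f (k + 2) (n - 2) * f k)
              = Matrix.trace (AT (s (k + 1)) * cycProd f (k + 1 + 1) (n - 1))
            rw [mul_assoc, ← h2]
            congr 3
            ring
  calc ∑ k : ZMod n, Matrix.trace (FT (s k) *
        (List.ofFn fun j : Fin (n - 1) => MT (s (k + 1 + ((j : ℕ) : ZMod n)))).prod)
      = ∑ k : ZMod n, (u k - u (k + 1)) := by
        refine Finset.sum_congr rfl fun k _ => ?_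
        rw [hgoal k, step k]
    _ = (∑ k : ZMod n, u k) - ∑ k : ZMod n, u (k + 1) := Finset.sum_sub_distrib (f := u) (g := fun k => u (k + 1))
    _ = 0 := by
        rw [Fintype.sum_equiv (Equiv.addRight (1 : ZMod n)) (fun k => u (k + 1)) u
          (fun k => rfl), sub_self]
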